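/- Let M and M' be two maximum matchings of the same finite bipartite graph G = (V, F, E). Then the coarse decompositions of G with respect to M and with respect to M' coincide: T_I(M) = T_I(M'), T_C(M) = T_C(M'), and T_O(M) = T_O(M'). In other words, the coarse decomposition of a bipartite graph is independent of the choice of maximum matching. -/

import Mathlib

variable {F V : Type*} [Fintype F] [Fintype V] [DecidableEq F] [DecidableEq V]

/-- `M` is a matching of the bipartite graph with edge set `E`:
`M ⊆ E` and no two edges of `M` share an endpoint. -/
def IsMatching (E M : Finset (F × V)) : Prop :=
  M ⊆ E ∧ (∀ e ∈ M, ∀ e' ∈ M, e.1 = e'.1 → e = e') ∧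
    ∀ e ∈ M, ∀ e' ∈ M, e.2 = e'.2 → e = e'

/-- `M` is a maximum matching: a matching of greatest cardinality. -/
def IsMaxMatching (E M : Finset (F × V)) : Prop :=
  IsMatching E M ∧ ∀ M' : Finset (F × V), IsMatching E M' → M'.card ≤ M.card

/-- The (symmetric) adjacency relation of the bipartite graph on `F ⊕ V`. -/
def sumAdj (E : Finset (F × V)) : (F ⊕ V) → (F ⊕ V) → Prop
  | Sum.inl f, Sum.inr v => (f, v) ∈ E
  | Sum.inr v, Sum.inl f => (f, v) ∈ E
  | _, _ => False

/-- The pair of consecutive path vertices forms an edge belonging to `M`. -/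
def pairInM (M : Finset (F × V)) : (F ⊕ V) × (F ⊕ V) → Prop
  | (Sum.inl f, Sum.inr v) => (f, v) ∈ M
  | (Sum.inr v, Sum.inl f) => (f, v) ∈ M
  | _ => False

/-- `l` is an `M`-alternating path in the bipartite graph with edge set `E`:
a nonempty sequence of distinct vertices in which consecutive vertices are joined
by edges of `E` lying alternately inside and outside `M`. -/
def IsAltPath (E M : Finset (F × V)) (l : List (F ⊕ V)) : Prop :=
  l ≠ [] ∧ l.Nodup ∧ l.Chain' (sumAdj E) ∧
    (l.zip l.tail).Chain' fun e e' => pairInM M e ↔ ¬ pairInM M e'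

/-- `v ∈ V` is not an endpoint of any edge of `M`. -/
def VUnmatched (M : Finset (F × V)) (v : V) : Prop := ∀ f, (f, v) ∉ M

/-- `f ∈ F` is not an endpoint of any edge of `M`. -/
def FUnmatched (M : Finset (F × V)) (f : F) : Prop := ∀ v, (f, v) ∉ M

/-- The incomplete set `T_I`: all vertices reachable from some `M`-unmatched
vertex of `V` by a (possibly trivial) `M`-alternating path. -/
def incompleteSet (E M : Finset (F × V)) : Set (F ⊕ V) :=
  {x | ∃ v : V, VUnmatched M v ∧ ∃ l : List (F ⊕ V),
    IsAltPath E M l ∧ l.head? = some (Sum.inr v) ∧ l.getLast? = some x}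

/-- The overcomplete set `T_O`: all vertices reachable from some `M`-unmatched
vertex of `F` by a (possibly trivial) `M`-alternating path. -/
def overcompleteSet (E M : Finset (F × V)) : Set (F ⊕ V) :=
  {x | ∃ f : F, FUnmatched M f ∧ ∃ l : List (F ⊕ V),
    IsAltPath E M l ∧ l.head? = some (Sum.inl f) ∧ l.getLast? = some x}

/-- The complete set `T_C = (V ∪ F) \ (T_I ∪ T_O)`. -/
def completeSet (E M : Finset (F × V)) : Set (F ⊕ V) :=
  Set.univ \ (incompleteSet E M ∪ overcompleteSet E M)

set_option linter.unusedSectionVars false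
set_option maxHeartbeats 800000

open Sum List

variable {E N M M' : Finset (F × V)}

@[simp] lemma pairInM_inl_inr {f : F} {v : V} : pairInM N (inl f, inr v) ↔ (f,v) ∈ N := Iff.rfl
@[simp] lemma pairInM_inr_inl {f : F} {v : V} : pairInM N (inr v, inl f) ↔ (f,v) ∈ N := Iff.rfl
@[simp] lemma pairInM_inl_inl {f f' : F} : ¬ pairInM N (inl f, inl f') := fun h => h
@[simp] lemma pairInM_inr_inr {v v' : V} : ¬ pairInM N (inr v, inr v') := fun h => h

@[simp] lemma sumAdj_inl_inr {f : F} {v : V} : sumAdj E (inl f) (inr v) ↔ (f,v) ∈ E := Iff.rfl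
@[simp] lemma sumAdj_inr_inl {f : F} {v : V} : sumAdj E (inr v) (inl f) ↔ (f,v) ∈ E := Iff.rfl
@[simp] lemma sumAdj_inl_inl {f f' : F} : ¬ sumAdj E (inl f) (inl f') := fun h => h
@[simp] lemma sumAdj_inr_inr {v v' : V} : ¬ sumAdj E (inr v) (inr v') := fun h => h

lemma sumAdj_cases {a b : F ⊕ V} (h : sumAdj E a b) :
    (∃ f v, a = inl f ∧ b = inr v ∧ (f,v) ∈ E) ∨ (∃ f v, a = inr v ∧ b = inl f ∧ (f,v) ∈ E) := by
  rcases a with f | v <;> rcases b with f' | v' <;> simp_all [sumAdj]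

lemma adj_isLeft {a b : F ⊕ V} (h : sumAdj E a b) : a.isLeft = !b.isLeft := by
  rcases sumAdj_cases h with ⟨f,v,rfl,rfl,-⟩|⟨f,v,rfl,rfl,-⟩ <;> rfl

lemma fst_unique (hN : IsMatching E N) {f : F} {v v' : V} (h : (f,v) ∈ N) (h' : (f,v') ∈ N) :
    v = v' := by
  have := hN.2.1 _ h _ h' rfl
  exact congrArg Prod.snd this

lemma snd_unique (hN : IsMatching E N) {f f' : F} {v : V} (h : (f,v) ∈ N) (h' : (f',v) ∈ N) :
    f = f' := by
  have := hN.2.2 _ h _ h' rfl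
  exact congrArg Prod.fst this

lemma zip_tail_cat : ∀ (q : List (F ⊕ V)) (a : F ⊕ V) (hq : q.getLast? = some a)
    (b : F ⊕ V) (r : List (F ⊕ V)),
    ((q ++ b :: r).zip (q ++ b :: r).tail) = q.zip q.tail ++ (a, b) :: ((b :: r).zip r)
  | [], a, hq, b, r => by simp at hq
  | [x], a, hq, b, r => by
    obtain rfl : x = a := by simpa using hq
    simp
  | x :: c :: q', a, hq, b, r => by
    have ih := zip_tail_cat (c :: q') a (by simpa using hq) b r
    simp only [List.cons_append, List.tail_cons, List.zip_cons_cons] at ih ⊢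
    rw [ih]

lemma statusAll :
    ∀ (l : List (F ⊕ V)) (x : F ⊕ V),
      List.Chain' (sumAdj E) (x :: l) →
      List.Chain' (fun e e' => pairInM N e ↔ ¬ pairInM N e') ((x :: l).zip l) →
      (∀ y ∈ l.head?, (pairInM N (x, y) ↔ x.isLeft = true)) →
      ∀ e ∈ (x :: l).zip l, (pairInM N e ↔ e.1.isLeft = true) := by
  intro l
  induction l with
  | nil => intro x _ _ _ e he; simp at he
  | cons y t ih =>
    intro x hadj halt hfs e he
    have hxy : pairInM N (x, y) ↔ x.isLeft = true := hfs y rfl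
    rw [List.zip_cons_cons] at he halt
    rcases List.mem_cons.mp he with rfl | he'
    · exact hxy
    · refine ih y hadj.tail halt.tail ?_ e he'
      cases t with
      | nil => intro z hz; simp at hz
      | cons z' t' =>
        intro z hz
        obtain rfl : z' = z := by simpa using hz
        have hrel : pairInM N (x,y) ↔ ¬ pairInM N (y,z') := by
          rw [List.zip_cons_cons] at halt
          exact (List.isChain_cons_cons.mp halt).1
        have hside : x.isLeft = !y.isLeft := adj_isLeft (List.isChain_cons_cons.mp hadj).1
        rw [hside] at hxy
        cases hb : y.isLeft <;> simp [hb] at hxy hrel ⊢ <;> tauto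

lemma head_unmatched_status {v₀ : V} (h : VUnmatched N v₀) (l : List (F ⊕ V)) :
    ∀ y ∈ l.head?, (pairInM N (inr v₀, y) ↔ (inr v₀ : F ⊕ V).isLeft = true) := by
  intro y _
  rcases y with g | w
  · simp [h g]
  · simp

lemma trivial_mem {v : V} (h : VUnmatched N v) : inr v ∈ incompleteSet E N :=
  ⟨v, h, [inr v], ⟨by simp, by simp, by exact List.isChain_singleton _, by exact List.isChain_nil⟩, by simp, by simp⟩

lemma witness_spec {x : F ⊕ V} (hx : x ∈ incompleteSet E N) :
    ∃ (v₀ : V) (l : List (F ⊕ V)), VUnmatched N v₀ ∧ IsAltPath E N (inr v₀ :: l) ∧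
      (inr v₀ :: l).getLast? = some x := by
  obtain ⟨v₀, hun, l, hp, hh, hl⟩ := hx
  cases l with
  | nil => exact absurd rfl hp.1
  | cons y t =>
    obtain rfl : y = inr v₀ := by simpa using hh
    exact ⟨v₀, t, hun, hp, hl⟩

lemma mem_on_witness {v₀ : V} {l : List (F ⊕ V)} (hun : VUnmatched N v₀)
    (hp : IsAltPath E N (inr v₀ :: l)) :
    ∀ y ∈ inr v₀ :: l, y ∈ incompleteSet E N := by
  intro y hy
  obtain ⟨p₁, p₂, heq⟩ := List.append_of_mem hy
  obtain ⟨hne, hnd, hadj, halt⟩ := hp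
  have hpre : inr v₀ :: l = (p₁ ++ [y]) ++ p₂ := by simpa using heq
  refine ⟨v₀, hun, p₁ ++ [y], ⟨by simp, ?_, ?_, ?_⟩, ?_, by simp⟩
  · exact List.Nodup.sublist (List.sublist_append_left _ _) (hpre ▸ hnd)
  · rw [hpre] at hadj
    exact (List.isChain_append.mp hadj).1
  · cases p₂ with
    | nil =>
      have h2 : p₁ ++ [y] = inr v₀ :: l := by simpa using hpre.symm
      rw [h2]; exact halt
    | cons b r =>
      have hcat := zip_tail_cat (p₁ ++ [y]) y List.getLast?_concat b r
      rw [hpre] at halt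
      rw [hcat] at halt
      exact (List.isChain_append.mp halt).1
  · cases p₁ with
    | nil =>
      simp only [List.nil_append] at heq ⊢
      injection heq with h1 _
      simp [h1]
    | cons a t =>
      have : a = inr v₀ := by
        simp only [List.cons_append] at heq
        injection heq with h1 _
        exact h1.symm
      simp [this]

lemma append_witness {v₀ : V} {l : List (F ⊕ V)} {x y : F ⊕ V} (hun : VUnmatched N v₀)
    (hp : IsAltPath E N (inr v₀ :: l))
    (hlast : (inr v₀ :: l).getLast? = some x)
    (hny : y ∉ inr v₀ :: l)
    (hadj : sumAdj E x y)
    (halt : ∀ e ∈ ((inr v₀ :: l).zip l).getLast?, (pairInM N e ↔ ¬ pairInM N (x, y))) :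
    y ∈ incompleteSet E N := by
  obtain ⟨-, hnd, hch, hzc⟩ := hp
  refine ⟨v₀, hun, (inr v₀ :: l) ++ [y], ⟨by simp, ?_, ?_, ?_⟩, by simp,
    by rw [List.getLast?_concat]⟩
  · refine List.Nodup.append hnd (by simp) ?_
    intro c hc hc'
    obtain rfl : c = y := by simpa using hc'
    exact hny hc
  · unfold List.Chain'; rw [List.isChain_append]
    refine ⟨hch, by simp, ?_⟩
    intro a ha b hb
    rw [hlast] at ha
    obtain rfl : x = a := by simpa using ha
    obtain rfl : y = b := by simpa using hb
    exact hadj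
  · have hcat := zip_tail_cat (inr v₀ :: l) x hlast y []
    rw [hcat]; unfold List.Chain'; rw [List.isChain_append]
    refine ⟨hzc, by simp, ?_⟩
    intro a ha b hb
    obtain rfl : (x, y) = b := by simpa using hb
    exact halt a ha

lemma last_edge {v₀ : V} {t : List (F ⊕ V)} {b : F ⊕ V} (hun : VUnmatched N v₀)
    (hp : IsAltPath E N ((inr v₀ :: t) ++ [b])) :
    ∃ a, (inr v₀ :: t).getLast? = some a ∧ sumAdj E a b ∧
      ((((inr v₀ :: t) ++ [b]).zip (t ++ [b])).getLast? = some (a, b)) ∧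
      (pairInM N (a, b) ↔ a.isLeft = true) ∧ a ∈ inr v₀ :: t := by
  have hne : (inr v₀ :: t : List (F ⊕ V)) ≠ [] := by simp
  set a := (inr v₀ :: t).getLast hne with hadef
  have ha : (inr v₀ :: t).getLast? = some a := List.getLast?_eq_getLast hne
  have hcat := zip_tail_cat (inr v₀ :: t) a ha b []
  have hadjab : sumAdj E a b := by
    have hadj := hp.2.2.1
    unfold List.Chain' at hadj; rw [List.isChain_append] at hadj
    exact hadj.2.2 a ha b rfl
  have hzl : ((((inr v₀ :: t) ++ [b]).zip (t ++ [b])).getLast? = some (a, b)) := by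
    have : ((inr v₀ :: t) ++ [b]).tail = t ++ [b] := rfl
    rw [← this, hcat]
    simp
  have hmemzip : (a, b) ∈ (((inr v₀ :: t) ++ [b]).zip (t ++ [b])) := by
    have : ((inr v₀ :: t) ++ [b]).tail = t ++ [b] := rfl
    rw [← this, hcat]
    simp
  have hstat := statusAll (t ++ [b]) (inr v₀) hp.2.2.1 hp.2.2.2
    (head_unmatched_status hun _) (a, b) hmemzip
  exact ⟨a, ha, hadjab, hzl, hstat, by rw [hadef]; exact List.getLast_mem hne⟩

lemma stepF (hN : IsMatching E N) {v : V} {g : F} (hv : inr v ∈ incompleteSet E N)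
    (hg : (g, v) ∈ E) : inl g ∈ incompleteSet E N := by
  obtain ⟨v₀, l, hun, hp, hlast⟩ := witness_spec hv
  rcases Classical.em ((inl g : F ⊕ V) ∈ inr v₀ :: l) with hmem | hmem
  · exact mem_on_witness hun hp _ hmem
  · refine append_witness hun hp hlast hmem (show sumAdj E (inr v) (inl g) from hg) ?_
    intro e he
    rcases List.eq_nil_or_concat l with rfl | ⟨t, b, rfl⟩
    · simp at he
    · simp only [List.concat_eq_append] at hp hlast hmem he
      have hb : b = inr v := by
        rw [show inr v₀ :: (t ++ [b]) = (inr v₀ :: t) ++ [b] from rfl,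
          List.getLast?_concat] at hlast
        simpa using hlast
      subst hb
      obtain ⟨a, ha, hadjab, hzl, hstat, hamem⟩ :=
        last_edge hun (show IsAltPath E N ((inr v₀ :: t) ++ [inr v]) from hp)
      obtain rfl : (a, inr v) = e := by
        rw [show inr v₀ :: (t ++ [inr v]) = (inr v₀ :: t) ++ [inr v] from rfl, hzl] at he
        simpa using he
      rcases sumAdj_cases hadjab with ⟨g', v', heq1, heq2, hE'⟩ | ⟨g', v', heq1, heq2, hE'⟩
      · -- a = inl g', inr v = inr v'
        obtain rfl : v = v' := by injection heq2 with h
        subst heq1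
        have hin : (g', v) ∈ N := by simpa using hstat
        simp only [pairInM_inl_inr, pairInM_inr_inl]
        constructor
        · intro _ hgN
          obtain rfl : g = g' := snd_unique hN hgN hin
          exact hmem (by exact List.mem_cons_of_mem _ (by simpa using hamem))
        · intro _
          exact hin
      · simp at heq2

lemma stepV (hN : IsMatching E N) {g : F} {v : V} (hg : inl g ∈ incompleteSet E N)
    (hgv : (g, v) ∈ N) : inr v ∈ incompleteSet E N := by
  obtain ⟨v₀, l, hun, hp, hlast⟩ := witness_spec hg
  rcases Classical.em ((inr v : F ⊕ V) ∈ inr v₀ :: l) with hmem | hmem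
  · exact mem_on_witness hun hp _ hmem
  · refine append_witness hun hp hlast hmem (show sumAdj E (inl g) (inr v) from hN.1 hgv) ?_
    intro e he
    rcases List.eq_nil_or_concat l with rfl | ⟨t, b, rfl⟩
    · simp at hlast
    · simp only [List.concat_eq_append] at hp hlast hmem he
      have hb : b = inl g := by
        rw [show inr v₀ :: (t ++ [b]) = (inr v₀ :: t) ++ [b] from rfl,
          List.getLast?_concat] at hlast
        simpa using hlast
      subst hb
      obtain ⟨a, ha, hadjab, hzl, hstat, hamem⟩ :=
        last_edge hun (show IsAltPath E N ((inr v₀ :: t) ++ [inl g]) from hp)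
      obtain rfl : (a, inl g) = e := by
        rw [show inr v₀ :: (t ++ [inl g]) = (inr v₀ :: t) ++ [inl g] from rfl, hzl] at he
        simpa using he
      rcases sumAdj_cases hadjab with ⟨g', v', heq1, heq2, hE'⟩ | ⟨g', v', heq1, heq2, hE'⟩
      · simp at heq2
      · -- a = inr v'
        subst heq1
        have hnin : ¬ pairInM N (inr v', inl g) := by
          intro hcon
          have := hstat.mp hcon
          simp at this
        simp only [pairInM_inr_inl, pairInM_inl_inr] at *
        constructor
        · intro hcon; exact absurd hcon hnin
        · intro hcon; exact absurd hgv hcon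

lemma mem_of_getLast?' {l : List (F ⊕ V)} {a : F ⊕ V} (h : l.getLast? = some a) : a ∈ l := by
  cases l with
  | nil => simp at h
  | cons x t =>
    rw [List.getLast?_eq_getLast (l := x :: t) (by simp)] at h
    obtain rfl : (x :: t).getLast (by simp) = a := by simpa using h
    exact List.getLast_mem _

lemma chain'_alt_congr {N N' : Finset (F × V)} :
    ∀ (L : List ((F ⊕ V) × (F ⊕ V))),
      (∀ e ∈ L, (pairInM N e ↔ pairInM N' e)) →
      List.Chain' (fun e e' => pairInM N e ↔ ¬ pairInM N e') L →
      List.Chain' (fun e e' => pairInM N' e ↔ ¬ pairInM N' e') L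
  | [], _, _ => by exact List.isChain_nil
  | [a], _, _ => by exact List.isChain_singleton _
  | a :: b :: L, h, hc => by
    unfold List.Chain' at hc ⊢; rw [List.isChain_cons_cons] at hc ⊢
    exact ⟨by rw [← h a (by simp), ← h b (by simp)]; exact hc.1,
      chain'_alt_congr (b :: L) (fun e he => h e (List.mem_cons_of_mem _ he)) hc.2⟩

lemma augment_matching (hN : IsMatching E N) {f : F} {v : V} (hE : (f,v) ∈ E)
    (hf : FUnmatched N f) (hv : VUnmatched N v) :
    IsMatching E (insert (f,v) N) ∧ (insert (f,v) N).card = N.card + 1 := by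
  refine ⟨⟨?_, ?_, ?_⟩, ?_⟩
  · intro e he
    rcases Finset.mem_insert.mp he with rfl | he
    · exact hE
    · exact hN.1 he
  · rintro ⟨a, b⟩ he ⟨a', b'⟩ he' h12
    simp only at h12
    subst h12
    rcases Finset.mem_insert.mp he with he | he <;> rcases Finset.mem_insert.mp he' with he' | he'
    · rw [he, he']
    · exfalso; have h : a = f := congrArg Prod.fst he; exact hf b' (h ▸ he')
    · exfalso; have h : a = f := congrArg Prod.fst he'; exact hf b (h ▸ he)
    · exact hN.2.1 _ he _ he' rfl
  · rintro ⟨a, b⟩ he ⟨a', b'⟩ he' h12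
    simp only at h12
    subst h12
    rcases Finset.mem_insert.mp he with he | he <;> rcases Finset.mem_insert.mp he' with he' | he'
    · rw [he, he']
    · exfalso; have h : b = v := congrArg Prod.snd he; exact hv a' (h ▸ he')
    · exfalso; have h : b = v := congrArg Prod.snd he'; exact hv a (h ▸ he)
    · exact hN.2.2 _ he _ he' rfl
  · rw [Finset.card_insert_of_notMem (fun hc => hv f hc)]

lemma rotateMatching (hN : IsMatching E N) {f : F} {v₁ v₂ : V} (h1 : (f,v₁) ∈ N) (hE : (f,v₂) ∈ E)
    (hun : VUnmatched N v₂) :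
    IsMatching E (insert (f,v₂) (N.erase (f,v₁))) ∧
      (insert (f,v₂) (N.erase (f,v₁))).card = N.card ∧
      VUnmatched (insert (f,v₂) (N.erase (f,v₁))) v₁ := by
  have hvne : v₁ ≠ v₂ := fun h => hun f (h ▸ h1)
  refine ⟨⟨?_, ?_, ?_⟩, ?_, ?_⟩
  · intro e he
    rcases Finset.mem_insert.mp he with rfl | he
    · exact hE
    · exact hN.1 (Finset.mem_of_mem_erase he)
  · rintro ⟨a, b⟩ he ⟨a', b'⟩ he' h12
    simp only at h12
    subst h12
    rcases Finset.mem_insert.mp he with he | he <;> rcases Finset.mem_insert.mp he' with he' | he'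
    · rw [he, he']
    · exfalso
      have h : a = f := congrArg Prod.fst he
      rw [h] at he'
      have : (f, b') = (f, v₁) := hN.2.1 _ (Finset.mem_of_mem_erase he') _ h1 rfl
      exact (Finset.mem_erase.mp he').1 this
    · exfalso
      have h : a = f := congrArg Prod.fst he'
      rw [h] at he
      have : (f, b) = (f, v₁) := hN.2.1 _ (Finset.mem_of_mem_erase he) _ h1 rfl
      exact (Finset.mem_erase.mp he).1 this
    · exact hN.2.1 _ (Finset.mem_of_mem_erase he) _ (Finset.mem_of_mem_erase he') rfl
  · rintro ⟨a, b⟩ he ⟨a', b'⟩ he' h12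
    simp only at h12
    subst h12
    rcases Finset.mem_insert.mp he with he | he <;> rcases Finset.mem_insert.mp he' with he' | he'
    · rw [he, he']
    · exfalso
      have h : b = v₂ := congrArg Prod.snd he
      rw [h] at he'
      exact hun a' (Finset.mem_of_mem_erase he')
    · exfalso
      have h : b = v₂ := congrArg Prod.snd he'
      rw [h] at he
      exact hun a (Finset.mem_of_mem_erase he)
    · exact hN.2.2 _ (Finset.mem_of_mem_erase he) _ (Finset.mem_of_mem_erase he') rfl
  · rw [Finset.card_insert_of_notMem (fun hc => hun f (Finset.mem_of_mem_erase hc)),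
      Finset.card_erase_of_mem h1]
    have : 1 ≤ N.card := Finset.card_pos.mpr ⟨_, h1⟩
    omega
  · intro g hg
    rcases Finset.mem_insert.mp hg with hg | hg
    · exact hvne (congrArg Prod.snd hg)
    · have : (g, v₁) = (f, v₁) := hN.2.2 _ (Finset.mem_of_mem_erase hg) _ h1 rfl
      exact (Finset.mem_erase.mp hg).1 this

lemma pairInM_rotate {f' : F} {v₀ v₁ : V} {e : (F ⊕ V) × (F ⊕ V)}
    (h1 : e.1 ≠ inl f') (h2 : e.2 ≠ inl f') :
    (pairInM N e ↔ pairInM (insert (f',v₀) (N.erase (f',v₁))) e) := by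
  rcases e with ⟨c, d⟩
  rcases c with a | b <;> rcases d with a' | b'
  · simp
  · simp only at h1
    have ha : a ≠ f' := fun h => h1 (by rw [h])
    simp [Finset.mem_insert, Finset.mem_erase, Prod.ext_iff, ha]
  · simp only at h2
    have ha : a' ≠ f' := fun h => h2 (by rw [h])
    simp [Finset.mem_insert, Finset.mem_erase, Prod.ext_iff, ha]
  · simp

lemma no_aug : ∀ (n : ℕ) (N : Finset (F × V)), IsMaxMatching E N →
    ∀ (l : List (F ⊕ V)) (v₀ : V) (f : F), l.length ≤ n → VUnmatched N v₀ →
      IsAltPath E N (inr v₀ :: l) → (inr v₀ :: l).getLast? = some (inl f) →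
      FUnmatched N f → False := by
  intro n
  induction n with
  | zero =>
    intro N hN l v₀ f hlen hun hp hlast hf
    obtain rfl : l = [] := List.length_eq_zero_iff.mp (Nat.le_zero.mp hlen)
    simp at hlast
  | succ n ih =>
    intro N hN l v₀ f hlen hun hp hlast hf
    cases l with
    | nil => simp at hlast
    | cons y t =>
      have hadj1 : sumAdj E (inr v₀) y := (List.isChain_cons_cons.mp hp.2.2.1).1
      rcases sumAdj_cases hadj1 with ⟨f', v', h1, h2, hE'⟩ | ⟨f', v', h1, h2, hE'⟩
      · simp at h1
      · obtain rfl : v₀ = v' := by injection h1 with h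
        subst h2
        cases t with
        | nil =>
          obtain rfl : f' = f := by simpa using hlast
          obtain ⟨hm2, hc2⟩ := augment_matching hN.1 hE' hf hun
          have := hN.2 _ hm2
          omega
        | cons z t' =>
          have hadj2 : sumAdj E (inl f') z :=
            (List.isChain_cons_cons.mp (List.isChain_cons_cons.mp hp.2.2.1).2).1
          obtain ⟨v₁, hz2, hE2⟩ : ∃ v₁, z = inr v₁ ∧ (f', v₁) ∈ E := by
            rcases sumAdj_cases hadj2 with ⟨f2, v₁, hz1, hz2, hE2⟩ | ⟨f2, v₁, hz1, hz2, hE2⟩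
            · obtain rfl : f' = f2 := by injection hz1 with h
              exact ⟨v₁, hz2, hE2⟩
            · simp at hz1
          subst hz2
          have halt := hp.2.2.2
          have hzipeq : ((inr v₀ :: inl f' :: inr v₁ :: t').zip
              (inr v₀ :: inl f' :: inr v₁ :: t').tail) =
              (inr v₀, inl f') :: (inl f', inr v₁) :: ((inr v₁ :: t').zip t') := rfl
          rw [hzipeq] at halt
          have hrel1 := (List.isChain_cons_cons.mp halt).1
          have h1N : ¬ pairInM N (inr v₀, inl f') := by simpa using hun f'
          have h2N : (f', v₁) ∈ N := by
            by_contra hc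
            exact h1N (hrel1.mpr (by simpa using hc))
          obtain ⟨hm2, hc2, hun2⟩ := rotateMatching hN.1 h2N hE' hun
          set N₂ := insert (f', v₀) (N.erase (f', v₁)) with hN₂def
          have hnd := hp.2.1
          have hf'nin : (inl f' : F ⊕ V) ∉ inr v₁ :: t' := by
            have := (List.nodup_cons.mp hnd).2
            exact (List.nodup_cons.mp this).1
          refine ih N₂ ⟨hm2, fun K hK => hc2 ▸ hN.2 K hK⟩ t' v₁ f ?_ hun2 ?_ ?_ ?_
          · have := hlen
            simp only [List.length_cons] at this ⊢
            omega
          · refine ⟨by simp, ?_, ?_, ?_⟩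
            · exact ((List.nodup_cons.mp (List.nodup_cons.mp hnd).2).2)
            · exact hp.2.2.1.tail.tail
            · have hZ := ((List.isChain_cons_cons.mp halt).2).tail
              refine chain'_alt_congr _ ?_ hZ
              intro e he
              have hm := List.of_mem_zip (a := e.1) (b := e.2) (by simpa using he)
              refine pairInM_rotate ?_ ?_
              · exact fun hc => hf'nin (hc ▸ hm.1)
              · exact fun hc => hf'nin (hc ▸ (List.mem_cons_of_mem _ hm.2))
          · rw [List.getLast?_cons_cons, List.getLast?_cons_cons] at hlast
            exact hlast
          · intro b hb
            have hffne : f ≠ f' := by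
              intro hc
              subst hc
              rw [List.getLast?_cons_cons, List.getLast?_cons_cons] at hlast
              exact hf'nin (mem_of_getLast?' hlast)
            rcases Finset.mem_insert.mp hb with hb | hb
            · exact hffne (congrArg Prod.fst hb)
            · exact hf b (Finset.mem_of_mem_erase hb)

lemma matched_of_mem (hM' : IsMaxMatching E M') {g : F} (h : inl g ∈ incompleteSet E M') :
    ∃ v, (g, v) ∈ M' := by
  by_contra hc
  push_neg at hc
  obtain ⟨v₀, l, hun, hp, hlast⟩ := witness_spec h
  exact no_aug l.length M' hM' l v₀ g le_rfl hun hp hlast (fun v => hc v)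

lemma unmatched_mem (hM' : IsMatching E M') :
    ∀ (n : ℕ) (N : Finset (F × V)), IsMaxMatching E N → (M' \ N).card ≤ n →
      ∀ v, VUnmatched N v → inr v ∈ incompleteSet E M' := by
  intro n
  induction n with
  | zero =>
    intro N hN hcard v hv
    rcases Classical.em (VUnmatched M' v) with h | h
    · exact trivial_mem h
    · exfalso
      obtain ⟨f, hf⟩ : ∃ f, (f, v) ∈ M' := by
        simpa [VUnmatched, not_forall] using h
      have hsub := Finset.sdiff_eq_empty_iff_subset.mp
        (Finset.card_eq_zero.mp (Nat.le_zero.mp hcard))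
      exact hv f (hsub hf)
  | succ n ih =>
    intro N hN hcard v hv
    rcases Classical.em (VUnmatched M' v) with h | h
    · exact trivial_mem h
    · obtain ⟨f, hf⟩ : ∃ f, (f, v) ∈ M' := by
        simpa [VUnmatched, not_forall] using h
      have hfN : (f, v) ∉ N := fun hc => hv f hc
      rcases Classical.em (FUnmatched N f) with hful | hful
      · exfalso
        obtain ⟨hm2, hc2⟩ := augment_matching hN.1 (hM'.1 hf) hful hv
        have := hN.2 _ hm2
        omega
      · obtain ⟨v₁, hv₁⟩ : ∃ v₁, (f, v₁) ∈ N := by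
          simpa [FUnmatched, not_forall] using hful
        have hvne : v₁ ≠ v := fun hc => hv f (hc ▸ hv₁)
        obtain ⟨hm2, hc2, hun2⟩ := rotateMatching hN.1 hv₁ (hM'.1 hf) hv
        set N₂ := insert (f, v) (N.erase (f, v₁)) with hN₂def
        have hmax2 : IsMaxMatching E N₂ := ⟨hm2, fun K hK => hc2 ▸ hN.2 K hK⟩
        have hcard2 : (M' \ N₂).card ≤ n := by
          have hsub : M' \ N₂ ⊆ (M' \ N).erase (f, v) := by
            intro e he'
            rcases Finset.mem_sdiff.mp he' with ⟨heM, heN2⟩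
            rw [Finset.mem_erase]
            refine ⟨fun hc => heN2 (hc ▸ Finset.mem_insert_self _ _),
              Finset.mem_sdiff.mpr ⟨heM, ?_⟩⟩
            intro heN
            have heq : e = (f, v₁) := by
              by_contra hne
              exact heN2 (Finset.mem_insert_of_mem (Finset.mem_erase.mpr ⟨hne, heN⟩))
            subst heq
            exact hvne (fst_unique hM' heM hf)
          calc (M' \ N₂).card ≤ ((M' \ N).erase (f, v)).card := Finset.card_le_card hsub
            _ = (M' \ N).card - 1 := Finset.card_erase_of_mem (Finset.mem_sdiff.mpr ⟨hf, hfN⟩)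
            _ ≤ n := by omega
        have hv₁T := ih N₂ hmax2 hcard2 v₁ hun2
        have hfT := stepF hM' hv₁T (hN.1.1 hv₁)
        exact stepV hM' hfT hf

lemma listInd {N : Finset (F × V)} (P : (F ⊕ V) → Prop)
    (hF : ∀ (v : V) (g : F), P (inr v) → (g, v) ∈ E → P (inl g))
    (hV : ∀ (g : F) (v : V), P (inl g) → (g, v) ∈ N → P (inr v)) :
    ∀ (l : List (F ⊕ V)) (x : F ⊕ V), P x →
      List.Chain' (sumAdj E) (x :: l) →
      List.Chain' (fun e e' => pairInM N e ↔ ¬ pairInM N e') ((x :: l).zip l) →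
      (∀ y ∈ l.head?, (pairInM N (x, y) ↔ x.isLeft = true)) →
      ∀ y ∈ l, P y := by
  intro l
  induction l with
  | nil => intro x _ _ _ _ y hy; simp at hy
  | cons y t ih =>
    intro x hPx hadj halt hfs z hz
    have hxy : pairInM N (x, y) ↔ x.isLeft = true := hfs y rfl
    have hadjxy : sumAdj E x y := (List.isChain_cons_cons.mp hadj).1
    have hPy : P y := by
      rcases sumAdj_cases hadjxy with ⟨g, v, rfl, rfl, hE'⟩ | ⟨g, v, rfl, rfl, hE'⟩
      · exact hV g v hPx (by simpa using hxy.mpr rfl)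
      · exact hF v g hPx hE'
    rw [List.zip_cons_cons] at halt
    rcases List.mem_cons.mp hz with rfl | hz'
    · exact hPy
    · refine ih y hPy hadj.tail halt.tail ?_ z hz'
      cases t with
      | nil => intro w hw; simp at hw
      | cons w t' =>
        intro w2 hw2
        obtain rfl : w = w2 := by simpa using hw2
        have hrel : pairInM N (x, y) ↔ ¬ pairInM N (y, w) := by
          rw [List.zip_cons_cons] at halt
          exact (List.isChain_cons_cons.mp halt).1
        have hside : x.isLeft = !y.isLeft := adj_isLeft hadjxy
        rw [hside] at hxy
        cases hb : y.isLeft <;> simp [hb] at hxy hrel ⊢ <;> tauto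

lemma claimF (hM' : IsMaxMatching E M') :
    ∀ (n : ℕ) (M : Finset (F × V)), IsMaxMatching E M → (M \ M').card ≤ n →
      ∀ (f : F) (v : V), inl f ∈ incompleteSet E M' → (f, v) ∈ M →
      inr v ∈ incompleteSet E M' := by
  intro n
  induction n with
  | zero =>
    intro M hM hcard f v hf hfv
    have hsub := Finset.sdiff_eq_empty_iff_subset.mp
      (Finset.card_eq_zero.mp (Nat.le_zero.mp hcard))
    exact stepV hM'.1 hf (hsub hfv)
  | succ n ih =>
    intro M hM hcard f v hf hfv
    rcases Classical.em ((f, v) ∈ M') with hin | hnin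
    · exact stepV hM'.1 hf hin
    · obtain ⟨v₁, hv₁⟩ := matched_of_mem hM' hf
      have hv1ne : v₁ ≠ v := fun hc => hnin (hc ▸ hv₁)
      have hv₁T : inr v₁ ∈ incompleteSet E M' := stepV hM'.1 hf hv₁
      rcases Classical.em (VUnmatched M v₁) with hunm | hunm
      · obtain ⟨hm2, hc2, hun2⟩ := rotateMatching hM.1 hfv (hM'.1.1 hv₁) hunm
        exact unmatched_mem hM'.1 (M' \ _).card _ ⟨hm2, fun K hK => hc2 ▸ hM.2 K hK⟩
          le_rfl v hun2
      · obtain ⟨g₀, hg₀⟩ : ∃ g, (g, v₁) ∈ M := by simpa [VUnmatched, not_forall] using hunm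
        have hg₀f : g₀ ≠ f := fun hc => hv1ne (fst_unique hM.1 (hc ▸ hg₀) hfv)
        have hg₀T : inl g₀ ∈ incompleteSet E M' := stepF hM'.1 hv₁T (hM.1.1 hg₀)
        have hg₀M' : (g₀, v₁) ∉ M' := fun hc => hg₀f (snd_unique hM'.1 hc hv₁)
        have inner : ∀ (k : ℕ) (W : Finset F) (g : F) (u : V),
            (Finset.univ \ W).card ≤ k → g ∉ W → g ≠ f → u ≠ v →
            inl g ∈ incompleteSet E M' → (g, u) ∈ M → (g, u) ∉ M' →
            (∀ a ∈ insert g W, ∃ b, (a, b) ∈ M ∧ ∃ c, (c, b) ∈ M' ∧ (c = f ∨ c ∈ W)) →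
            inr v ∈ incompleteSet E M' := by
          intro k
          induction k with
          | zero =>
            intro W g u hk hgW _ _ _ _ _ _
            exfalso
            have hmem : g ∈ Finset.univ \ W := Finset.mem_sdiff.mpr ⟨Finset.mem_univ g, hgW⟩
            have := Finset.card_pos.mpr ⟨g, hmem⟩
            omega
          | succ k ihk =>
            intro W g u hk hgW hgf huv hgT hguM hguM' hInv
            obtain ⟨u₁, hu₁⟩ := matched_of_mem hM' hgT
            have hu₁u : u₁ ≠ u := fun hc => hguM' (hc ▸ hu₁)
            have hu₁T : inr u₁ ∈ incompleteSet E M' := stepV hM'.1 hgT hu₁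
            rcases Classical.em (u₁ = v) with rfl | hu₁v
            · exact hu₁T
            · rcases Classical.em (VUnmatched M u₁) with hum | hum
              · obtain ⟨hm2, hc2, hun2⟩ := rotateMatching hM.1 hguM (hM'.1.1 hu₁) hum
                refine ih (insert (g, u₁) (M.erase (g, u)))
                  ⟨hm2, fun K hK => hc2 ▸ hM.2 K hK⟩ ?_ f v hf ?_
                · have hsub : insert (g, u₁) (M.erase (g, u)) \ M' ⊆ (M \ M').erase (g, u) := by
                    intro e he
                    rcases Finset.mem_sdiff.mp he with ⟨he1, he2⟩
                    rcases Finset.mem_insert.mp he1 with rfl | he1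
                    · exact absurd hu₁ he2
                    · exact Finset.mem_erase.mpr ⟨(Finset.mem_erase.mp he1).1,
                        Finset.mem_sdiff.mpr ⟨Finset.mem_of_mem_erase he1, he2⟩⟩
                  have h1 : ((M \ M').erase (g, u)).card = (M \ M').card - 1 :=
                    Finset.card_erase_of_mem (Finset.mem_sdiff.mpr ⟨hguM, hguM'⟩)
                  have h2 := Finset.card_le_card hsub
                  have h3 : 1 ≤ (M \ M').card :=
                    Finset.card_pos.mpr ⟨_, Finset.mem_sdiff.mpr ⟨hguM, hguM'⟩⟩
                  omega
                · exact Finset.mem_insert_of_mem (Finset.mem_erase.mpr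
                    ⟨fun hc => hgf (congrArg Prod.fst hc).symm, hfv⟩)
              · obtain ⟨g₂, hg₂⟩ : ∃ g₂, (g₂, u₁) ∈ M := by
                  simpa [VUnmatched, not_forall] using hum
                have hg₂g : g₂ ≠ g := fun hc => hu₁u (fst_unique hM.1 (hc ▸ hg₂) hguM)
                have hg₂f : g₂ ≠ f := fun hc => hu₁v (fst_unique hM.1 (hc ▸ hg₂) hfv)
                have hg₂T : inl g₂ ∈ incompleteSet E M' := stepF hM'.1 hu₁T (hM.1.1 hg₂)
                have hg₂M' : (g₂, u₁) ∉ M' := fun hc => hg₂g (snd_unique hM'.1 hc hu₁)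
                have hg₂W : g₂ ∉ insert g W := by
                  intro hc
                  obtain ⟨b, hb, c, hc', hcw⟩ := hInv g₂ hc
                  obtain rfl : u₁ = b := fst_unique hM.1 hg₂ hb
                  obtain rfl : c = g := snd_unique hM'.1 hc' hu₁
                  rcases hcw with rfl | hcw
                  · exact hgf rfl
                  · exact hgW hcw
                refine ihk (insert g W) g₂ u₁ ?_ hg₂W hg₂f hu₁v hg₂T hg₂ hg₂M' ?_
                · have heq : Finset.univ \ insert g W = (Finset.univ \ W).erase g := by
                    ext a
                    simp only [Finset.mem_sdiff, Finset.mem_erase, Finset.mem_insert,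
                      Finset.mem_univ, true_and]
                    tauto
                  rw [heq, Finset.card_erase_of_mem
                    (Finset.mem_sdiff.mpr ⟨Finset.mem_univ _, hgW⟩)]
                  have : 1 ≤ (Finset.univ \ W).card :=
                    Finset.card_pos.mpr ⟨g, Finset.mem_sdiff.mpr ⟨Finset.mem_univ _, hgW⟩⟩
                  omega
                · intro a ha
                  rcases Finset.mem_insert.mp ha with rfl | ha
                  · exact ⟨u₁, hg₂, g, hu₁, Or.inr (Finset.mem_insert_self _ _)⟩
                  · obtain ⟨b, hb, c, hc', hcw⟩ := hInv a ha
                    exact ⟨b, hb, c, hc', hcw.imp id Finset.mem_insert_of_mem⟩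
        refine inner (Finset.univ \ ∅).card ∅ g₀ v₁ le_rfl (by simp) hg₀f hv1ne hg₀T hg₀ hg₀M' ?_
        intro a ha
        rcases Finset.mem_insert.mp ha with rfl | ha
        · exact ⟨v₁, hg₀, f, hv₁, Or.inl rfl⟩
        · simp at ha

lemma main_incl (hM : IsMaxMatching E M) (hM' : IsMaxMatching E M') :
    incompleteSet E M ⊆ incompleteSet E M' := by
  intro x hx
  obtain ⟨v₀, l, hun, hp, hlast⟩ := witness_spec hx
  have hbase : (inr v₀ : F ⊕ V) ∈ incompleteSet E M' :=
    unmatched_mem hM'.1 (M' \ M).card M hM le_rfl v₀ hun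
  have hall := listInd (N := M) (fun y => y ∈ incompleteSet E M')
    (fun v g hv hgE => stepF hM'.1 hv hgE)
    (fun g v hg hgM => claimF hM' (M \ M').card M hM le_rfl g v hg hgM)
    l (inr v₀) hbase hp.2.2.1 hp.2.2.2 (head_unmatched_status hun l)
  rcases List.mem_cons.mp (mem_of_getLast?' hlast) with rfl | hx'
  · exact hbase
  · exact hall x hx'

lemma mem_swap {A : Finset (F × V)} {f : F} {v : V} :
    (v, f) ∈ A.image Prod.swap ↔ (f, v) ∈ A := by
  constructor
  · intro h
    obtain ⟨⟨a, b⟩, hab, heq⟩ := Finset.mem_image.mp h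
    obtain ⟨h1, h2⟩ := Prod.mk.injEq .. ▸ heq
    simp only [Prod.swap_prod_mk, Prod.mk.injEq] at heq
    rw [← heq.2, ← heq.1]
    exact hab
  · intro h
    exact Finset.mem_image.mpr ⟨(f, v), h, rfl⟩

lemma swap_swap_image {A : Finset (F × V)} : (A.image Prod.swap).image Prod.swap = A := by
  rw [Finset.image_image]
  simp [Function.comp_def]

lemma sumadj_swap {E : Finset (F × V)} {a b : F ⊕ V} (h : sumAdj E a b) :
    sumAdj (E.image Prod.swap) a.swap b.swap := by
  rcases sumAdj_cases h with ⟨f, v, rfl, rfl, hE⟩ | ⟨f, v, rfl, rfl, hE⟩ <;>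
    simpa [Sum.swap] using mem_swap.mpr hE

lemma pair_swap {M : Finset (F × V)} (e : (F ⊕ V) × (F ⊕ V)) :
    pairInM (M.image Prod.swap) (Prod.map Sum.swap Sum.swap e) ↔ pairInM M e := by
  rcases e with ⟨a | b, c | d⟩ <;> simp [Sum.swap, mem_swap] <;> aesop

lemma pathSwap {E M : Finset (F × V)} {l : List (F ⊕ V)} (hp : IsAltPath E M l) :
    IsAltPath (E.image Prod.swap) (M.image Prod.swap) (l.map Sum.swap) := by
  have hinj : Function.Injective (Sum.swap : F ⊕ V → V ⊕ F) := fun a b h => by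
    rw [← Sum.swap_swap a, h, Sum.swap_swap]
  obtain ⟨hne, hnd, hadj, halt⟩ := hp
  refine ⟨by simpa using hne, hnd.map hinj, ?_, ?_⟩
  · unfold List.Chain'; rw [List.isChain_map]
    exact List.IsChain.imp (fun a b h => sumadj_swap h) hadj
  · have hzip : ((l.map Sum.swap).zip (l.map Sum.swap).tail) =
        (l.zip l.tail).map (Prod.map Sum.swap Sum.swap) := by
      rw [← List.map_tail, List.zip_map]
    rw [hzip]; unfold List.Chain'; rw [List.isChain_map]
    refine List.IsChain.imp ?_ halt
    intro e e' h
    rw [pair_swap, pair_swap]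
    exact h

lemma matchingSwap {E A : Finset (F × V)} (h : IsMatching E A) :
    IsMatching (E.image Prod.swap) (A.image Prod.swap) := by
  refine ⟨Finset.image_subset_image h.1, ?_, ?_⟩
  · rintro ⟨x, y⟩ he ⟨x', y'⟩ he' h1
    simp only at h1
    subst h1
    have hy : (y, x) ∈ A := mem_swap.mp he
    have hy' : (y', x) ∈ A := mem_swap.mp he'
    obtain rfl : y = y' := snd_unique h hy hy'
    rfl
  · rintro ⟨x, y⟩ he ⟨x', y'⟩ he' h1
    simp only at h1
    subst h1
    have hy : (y, x) ∈ A := mem_swap.mp he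
    have hy' : (y, x') ∈ A := mem_swap.mp he'
    obtain rfl : x = x' := fst_unique h hy hy'
    rfl

lemma maxSwap {E A : Finset (F × V)} (h : IsMaxMatching E A) :
    IsMaxMatching (E.image Prod.swap) (A.image Prod.swap) := by
  have hinj : Function.Injective (Prod.swap : F × V → V × F) := Prod.swap_injective
  refine ⟨matchingSwap h.1, ?_⟩
  intro K hK
  have hK' : IsMatching E (K.image Prod.swap) := by
    have := matchingSwap hK
    rwa [swap_swap_image] at this
  have := h.2 _ hK'
  rw [Finset.card_image_of_injective _ Prod.swap_injective] at this
  rw [Finset.card_image_of_injective _ Prod.swap_injective]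
  exact this

lemma overcomplete_swap {E M : Finset (F × V)} {x : F ⊕ V} (h : x ∈ overcompleteSet E M) :
    Sum.swap x ∈ incompleteSet (E.image Prod.swap) (M.image Prod.swap) := by
  obtain ⟨f, hf, l, hp, hh, hl⟩ := h
  refine ⟨f, ?_, l.map Sum.swap, pathSwap hp, ?_, ?_⟩
  · intro g hg
    exact hf g (mem_swap.mp hg)
  · rw [List.head?_map, hh]; rfl
  · rw [List.getLast?_map, hl]; rfl

lemma incomplete_swap {E M : Finset (F × V)} {x : F ⊕ V} (h : x ∈ incompleteSet E M) :
    Sum.swap x ∈ overcompleteSet (E.image Prod.swap) (M.image Prod.swap) := by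
  obtain ⟨v, hv, l, hp, hh, hl⟩ := h
  refine ⟨v, ?_, l.map Sum.swap, pathSwap hp, ?_, ?_⟩
  · intro g hg
    exact hv g (mem_swap.mp hg)
  · rw [List.head?_map, hh]; rfl
  · rw [List.getLast?_map, hl]; rfl


/-- the coarse decomposition of a finite bipartite graph does not
depend on the choice of maximum matching. -/
theorem coarse_decomposition_unique (E M M' : Finset (F × V))
    (hM : IsMaxMatching E M) (hM' : IsMaxMatching E M') :
    incompleteSet E M = incompleteSet E M' ∧
    completeSet E M = completeSet E M' ∧
    overcompleteSet E M = overcompleteSet E M' := by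
  have hI : incompleteSet E M = incompleteSet E M' :=
    Set.Subset.antisymm (main_incl hM hM') (main_incl hM' hM)
  have hO : overcompleteSet E M = overcompleteSet E M' := by
    ext x
    constructor
    · intro h
      have h2 := main_incl (maxSwap hM) (maxSwap hM') (overcomplete_swap h)
      have h3 := incomplete_swap h2
      rw [swap_swap_image, swap_swap_image] at h3
      simpa using h3
    · intro h
      have h2 := main_incl (maxSwap hM') (maxSwap hM) (overcomplete_swap h)
      have h3 := incomplete_swap h2
      rw [swap_swap_image, swap_swap_image] at h3
      simpa using h3
  refine ⟨hI, ?_, hO⟩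
  unfold completeSet
  rw [hI, hO]
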